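/- arXiv:2005.12020 — 2 statements merged into one kernel-verified Lean document; each statement's English description precedes it below -/
import Mathlib

section
/- Brezzi-type stability (finite-dimensional version): Let V, M be finite-dimensional real inner product spaces, a : V × V → ℝ a bilinear form that is coercive on V (a(v,v) ≥ α‖v‖² for all v, α > 0) and bounded, and b : M × V → ℝ a bounded bilinear form satisfying the inf-sup condition: for every μ ∈ M, sup_{v≠0} b(μ,v)/‖v‖ ≥ β‖μ‖ with β > 0. Then for every pair of linear functionals (f, g) on V and M, the saddle point problem a(u,v) + b(λ,v) = f(v) for all v ∈ V and b(μ,u) = g(μ) for all μ ∈ M has a unique solution (u, λ) ∈ V × M. -/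
set_option maxHeartbeats 1000000

/-- Brezzi-type stability, finite-dimensional version: with `a` coercive and
bounded on `V`, `b` bounded on `M × V` and satisfying the inf-sup condition,
the saddle point problem has a unique solution `(u, λ)` for any data `(f, g)`. -/
theorem brezzi_finite_dimensional {V M : Type*}
    [NormedAddCommGroup V] [InnerProductSpace ℝ V] [FiniteDimensional ℝ V]
    [NormedAddCommGroup M] [InnerProductSpace ℝ M] [FiniteDimensional ℝ M]
    (a : V →ₗ[ℝ] V →ₗ[ℝ] ℝ) (b : M →ₗ[ℝ] V →ₗ[ℝ] ℝ)
    (α β Ca Cb : ℝ) (hα : 0 < α) (hβ : 0 < β)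
    (hcoer : ∀ v, a v v ≥ α * ‖v‖ ^ 2)
    (habd : ∀ u v, |a u v| ≤ Ca * ‖u‖ * ‖v‖)
    (hbbd : ∀ μ v, |b μ v| ≤ Cb * ‖μ‖ * ‖v‖)
    (hinfsup : ∀ μ : M, ∃ v : V, v ≠ 0 ∧ b μ v ≥ β * ‖μ‖ * ‖v‖)
    (f : V →ₗ[ℝ] ℝ) (g : M →ₗ[ℝ] ℝ) :
    ∃! p : V × M, (∀ v, a p.1 v + b p.2 v = f v) ∧ (∀ μ, b μ p.1 = g μ) := by
  -- the saddle point operator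
  set T : (V × M) →ₗ[ℝ] ((V →ₗ[ℝ] ℝ) × (M →ₗ[ℝ] ℝ)) :=
    ((a.comp (LinearMap.fst ℝ V M) + b.comp (LinearMap.snd ℝ V M)).prod
      (b.flip.comp (LinearMap.fst ℝ V M))) with hT
  have hTapp : ∀ p : V × M, T p = (a p.1 + b p.2, b.flip p.1) := fun p => rfl
  -- injectivity
  have hinj : Function.Injective T := by
    rw [← LinearMap.ker_eq_bot, LinearMap.ker_eq_bot']
    rintro ⟨u, l⟩ hp
    rw [hTapp] at hp
    have h1 : a u + b l = 0 := congrArg Prod.fst hp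
    have h2 : b.flip u = 0 := congrArg Prod.snd hp
    have hbl : ∀ μ : M, b μ u = 0 := fun μ => congrFun (congrArg DFunLike.coe h2) μ
    have h1' : ∀ v, a u v + b l v = 0 := fun v => congrFun (congrArg DFunLike.coe h1) v
    have hauu : a u u = 0 := by have := h1' u; rw [hbl l] at this; linarith
    have hu : u = 0 := by
      by_contra hu
      have hn : (0:ℝ) < ‖u‖ := norm_pos_iff.mpr hu
      have := hcoer u; rw [hauu] at this
      nlinarith [mul_pos hα (pow_pos hn 2)]
    subst hu
    have hl : l = 0 := by
      obtain ⟨v, hv0, hv⟩ := hinfsup l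
      have hblv : b l v = 0 := by
        have h := h1' v
        rw [map_zero a, LinearMap.zero_apply, zero_add] at h
        exact h
      have hv' : (0:ℝ) < ‖v‖ := norm_pos_iff.mpr hv0
      have hln : ‖l‖ = 0 := by nlinarith [norm_nonneg l, mul_pos hβ hv']
      exact norm_eq_zero.mp hln
    rw [hl]
    rfl
  -- dimensions agree, so T is surjective
  have hdim : Module.finrank ℝ (V × M) =
      Module.finrank ℝ ((V →ₗ[ℝ] ℝ) × (M →ₗ[ℝ] ℝ)) := by
    simp [Module.finrank_prod, Module.finrank_linearMap_self]
  have hsurj : Function.Surjective T :=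
    (LinearMap.injective_iff_surjective_of_finrank_eq_finrank hdim).mp hinj
  obtain ⟨p, hp⟩ := hsurj (f, g)
  rw [hTapp] at hp
  refine ⟨p, ⟨?_, ?_⟩, ?_⟩
  · intro v
    have := congrFun (congrArg DFunLike.coe (congrArg Prod.fst hp)) v
    simpa using this
  · intro μ
    have := congrFun (congrArg DFunLike.coe (congrArg Prod.snd hp)) μ
    simpa using this
  · rintro q ⟨hq1, hq2⟩
    apply hinj
    rw [hTapp, hTapp, hp]
    refine Prod.ext ?_ ?_
    · ext v; simpa using hq1 v
    · ext μ; simpa using hq2 μ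
end

section
/- The eigenvalues σ_n from the previous statement satisfy σ_n ≤ σ₀ · C/(1+n) for a constant C depending only on R₁, R₂, and each σ_n > 0; moreover σ_n · (1 + n²)^{1/2} is bounded above and below by positive constants independent of n, which expresses that the Neumann-to-Dirichlet map S₁ is bounded and coercive between the Fourier norms of order −1/2 and 1/2. -/
/-- The Neumann-to-Dirichlet eigenvalues `σ₀ = R₁ ln(R₂/R₁)`,
`σ_n = (R₁/n)(1 − q^{2n})/(1 + q^{2n})` (`q = R₁/R₂`) are positive, satisfy
`σ_n ≤ σ₀ C'/(1+n)`, and `σ_n √(1+n²)` is bounded above and below by positive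
constants depending only on `R₁, R₂`. -/
theorem ntd_eigenvalue_bounds (R₁ R₂ : ℝ) (h1 : 0 < R₁) (h12 : R₁ < R₂)
    (σ : ℕ → ℝ)
    (hσ0 : σ 0 = R₁ * Real.log (R₂ / R₁))
    (hσn : ∀ n : ℕ, 1 ≤ n →
      σ n = (R₁ / n) * ((1 - (R₁ / R₂) ^ (2 * n)) / (1 + (R₁ / R₂) ^ (2 * n)))) :
    (∀ n, 0 < σ n) ∧
    (∃ C' : ℝ, 0 < C' ∧ ∀ n : ℕ, σ n ≤ σ 0 * C' / (1 + (n : ℝ))) ∧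
    (∃ c C : ℝ, 0 < c ∧ c ≤ C ∧ ∀ n : ℕ,
      c ≤ σ n * Real.sqrt (1 + (n : ℝ) ^ 2) ∧
      σ n * Real.sqrt (1 + (n : ℝ) ^ 2) ≤ C) := by
  set q := R₁ / R₂ with hq
  have hR2 : 0 < R₂ := h1.trans h12
  have hq0 : 0 < q := div_pos h1 hR2
  have hq1 : q < 1 := (div_lt_one hR2).2 h12
  have hq2lt : q ^ 2 < 1 := pow_lt_one₀ hq0.le hq1 two_ne_zero
  have hσ0pos : 0 < σ 0 := by
    rw [hσ0]
    exact mul_pos h1 (Real.log_pos ((one_lt_div h1).2 h12))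
  have key : ∀ n : ℕ, 1 ≤ n →
      R₁ / n * ((1 - q ^ 2) / 2) ≤ σ n ∧ σ n ≤ R₁ / n := by
    intro n hn
    have hn0 : (0 : ℝ) < n := by exact_mod_cast hn
    have hqn : q ^ (2 * n) ≤ q ^ 2 :=
      pow_le_pow_of_le_one hq0.le hq1.le (by omega)
    have hqnpos : 0 < q ^ (2 * n) := pow_pos hq0 _
    have hqnlt : q ^ (2 * n) < 1 := pow_lt_one₀ hq0.le hq1 (by omega)
    rw [hσn n hn]
    constructor
    · apply mul_le_mul_of_nonneg_left _ (le_of_lt (div_pos h1 hn0))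
      apply div_le_div₀ (by linarith) (by linarith) (by linarith) (by linarith)
    · have : (1 - q ^ (2 * n)) / (1 + q ^ (2 * n)) ≤ 1 :=
        div_le_one_of_le₀ (by linarith) (by linarith)
      calc R₁ / n * ((1 - q ^ (2 * n)) / (1 + q ^ (2 * n)))
          ≤ R₁ / n * 1 :=
            mul_le_mul_of_nonneg_left this (le_of_lt (div_pos h1 hn0))
        _ = R₁ / n := mul_one _
  have hpos : ∀ n, 0 < σ n := by
    intro n
    rcases Nat.eq_zero_or_pos n with h | h
    · rwa [h]
    · have hn0 : (0 : ℝ) < n := by exact_mod_cast h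
      have := (key n h).1
      have : 0 < R₁ / n * ((1 - q ^ 2) / 2) :=
        mul_pos (div_pos h1 hn0) (by linarith)
      linarith [(key n h).1]
  refine ⟨hpos, ?_, ?_⟩
  · refine ⟨max 1 (2 * R₁ / σ 0), lt_of_lt_of_le one_pos (le_max_left _ _), ?_⟩
    intro n
    rcases Nat.eq_zero_or_pos n with h | h
    · subst h
      simp only [Nat.cast_zero, add_zero, div_one]
      nlinarith [le_max_left (1 : ℝ) (2 * R₁ / σ 0)]
    · have hn0 : (0 : ℝ) < n := by exact_mod_cast h
      have hn1 : (1 : ℝ) ≤ n := by exact_mod_cast h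
      have h2 : σ 0 * max 1 (2 * R₁ / σ 0) ≥ 2 * R₁ := by
        have := le_max_right (1 : ℝ) (2 * R₁ / σ 0)
        calc 2 * R₁ = σ 0 * (2 * R₁ / σ 0) := by field_simp
          _ ≤ σ 0 * max 1 (2 * R₁ / σ 0) :=
            mul_le_mul_of_nonneg_left this hσ0pos.le
      have hstep : σ n ≤ 2 * R₁ / (1 + n) := by
        have := (key n h).2
        have h3 : R₁ / n ≤ 2 * R₁ / (1 + n) := by
          rw [div_le_div_iff₀ hn0 (by linarith)]
          nlinarith
        linarith
      calc σ n ≤ 2 * R₁ / (1 + (n : ℝ)) := hstep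
        _ ≤ σ 0 * max 1 (2 * R₁ / σ 0) / (1 + n) := by gcongr <;> linarith
  · refine ⟨min (σ 0) (R₁ * ((1 - q ^ 2) / 2)), max (σ 0) (Real.sqrt 2 * R₁),
      lt_min hσ0pos (mul_pos h1 (by linarith)), le_trans (min_le_left _ _) (le_max_left _ _), ?_⟩
    intro n
    rcases Nat.eq_zero_or_pos n with h | h
    · subst h
      have hs1 : Real.sqrt (1 + ((0 : ℕ) : ℝ) ^ 2) = 1 := by norm_num
      rw [hs1, mul_one]
      exact ⟨min_le_left _ _, le_max_left _ _⟩
    · have hn0 : (0 : ℝ) < n := by exact_mod_cast h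
      have hn1 : (1 : ℝ) ≤ (n : ℝ) := by exact_mod_cast h
      have hnsq : (1 : ℝ) ≤ (n : ℝ) ^ 2 := by nlinarith
      have hsl : (n : ℝ) ≤ Real.sqrt (1 + (n : ℝ) ^ 2) := by
        have hh := Real.sqrt_le_sqrt (show (n : ℝ) ^ 2 ≤ 1 + (n : ℝ) ^ 2 by linarith)
        rwa [Real.sqrt_sq hn0.le] at hh
      have hsu : Real.sqrt (1 + (n : ℝ) ^ 2) ≤ Real.sqrt 2 * n := by
        rw [show Real.sqrt 2 * (n : ℝ) = Real.sqrt (2 * (n : ℝ) ^ 2) by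
          rw [Real.sqrt_mul (by norm_num), Real.sqrt_sq hn0.le]]
        exact Real.sqrt_le_sqrt (by linarith)
      have hs0 : (0 : ℝ) ≤ Real.sqrt (1 + (n : ℝ) ^ 2) := Real.sqrt_nonneg _
      constructor
      · have h3 : R₁ * ((1 - q ^ 2) / 2) ≤ σ n * Real.sqrt (1 + (n : ℝ) ^ 2) := by
          calc R₁ * ((1 - q ^ 2) / 2) = R₁ / n * ((1 - q ^ 2) / 2) * n := by field_simp
            _ ≤ σ n * Real.sqrt (1 + (n : ℝ) ^ 2) := by
                apply mul_le_mul (key n h).1 hsl hn0.le (hpos n).le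
        exact le_trans (min_le_right _ _) h3
      · have h4 : σ n * Real.sqrt (1 + (n : ℝ) ^ 2) ≤ Real.sqrt 2 * R₁ := by
          calc σ n * Real.sqrt (1 + (n : ℝ) ^ 2) ≤ R₁ / n * (Real.sqrt 2 * n) :=
              mul_le_mul (key n h).2 hsu hs0 (div_pos h1 hn0).le
            _ = Real.sqrt 2 * R₁ := by field_simp
        exact le_trans h4 (le_max_right _ _)
end
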